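/- Let n ≥ 1, 1 < p < ∞, 1 ≤ q < ∞, m > 0, c₀ > 0, and C₀ > 0. Let (G_j)_{j∈ℤ} and (F_{j,j_t})_{j,j_t∈ℤ} be families of measurable functions ℝⁿ → [0,∞] such that for all j_t ∈ ℤ, all j ≥ j_t, and every x ∈ ℝⁿ, F_{j,j_t}(x) ≤ C₀ · e^{−c₀·4^{(j−j_t)}} · Σ_{j'∈ℤ, |j−j'|≤1} M G_{j'}(x). Then there exists a constant C > 0, depending only on n, p, q, m, c₀, C₀, such that sup_{j_t∈ℤ} Σ_{j≥j_t} ( 2^{2(j−j_t)m} · 2^{j(n/p−1)} · ‖F_{j,j_t}‖_{L^{p,∞}} )^q ≤ C · Σ_{j'∈ℤ} ( 2^{j'(n/p−1)} · ‖G_{j'}‖_{L^{p,∞}} )^q. -/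

import Mathlib

open MeasureTheory ENNReal

/-- The Hardy–Littlewood maximal function of `g : ℝⁿ → [0,∞]`. -/
noncomputable def maxFn (n : ℕ) (g : EuclideanSpace ℝ (Fin n) → ℝ≥0∞)
    (x : EuclideanSpace ℝ (Fin n)) : ℝ≥0∞ :=
  ⨆ (r : ℝ) (_ : 0 < r), (∫⁻ y in Metric.ball x r, g y) / volume (Metric.ball x r)

/-- The weak-`L^p` quasinorm `sup_{λ>0} λ |{x : h x > λ}|^{1/p}` of `h : ℝⁿ → [0,∞]`. -/
noncomputable def wLp (n : ℕ) (p : ℝ) (h : EuclideanSpace ℝ (Fin n) → ℝ≥0∞) : ℝ≥0∞ :=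
  ⨆ (l : NNReal) (_ : 0 < l), (l : ℝ≥0∞) * (volume {x | (l : ℝ≥0∞) < h x}) ^ (1 / p)


open Metric Set

variable {n : ℕ}

lemma maxFn_mono {g₁ g₂ : EuclideanSpace ℝ (Fin n) → ℝ≥0∞} (h : ∀ x, g₁ x ≤ g₂ x)
    (x : EuclideanSpace ℝ (Fin n)) : maxFn n g₁ x ≤ maxFn n g₂ x := by
  refine iSup₂_le fun r hr => ?_
  refine le_trans ?_ (le_iSup₂ (f := fun r _ => (∫⁻ y in Metric.ball x r, g₂ y) / volume (Metric.ball x r)) r hr)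
  exact ENNReal.div_le_div_right (lintegral_mono fun y => h y) _

lemma maxFn_add_le {g₁ g₂ : EuclideanSpace ℝ (Fin n) → ℝ≥0∞} (hg₁ : Measurable g₁)
    (x : EuclideanSpace ℝ (Fin n)) :
    maxFn n (fun y => g₁ y + g₂ y) x ≤ maxFn n g₁ x + maxFn n g₂ x := by
  refine iSup₂_le fun r hr => ?_
  rw [lintegral_add_left hg₁, ENNReal.add_div]
  exact add_le_add
    (le_iSup₂ (f := fun r (_ : 0 < r) => (∫⁻ y in Metric.ball x r, g₁ y) / volume (Metric.ball x r)) r hr)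
    (le_iSup₂ (f := fun r (_ : 0 < r) => (∫⁻ y in Metric.ball x r, g₂ y) / volume (Metric.ball x r)) r hr)

lemma maxFn_const_le (c : ℝ≥0∞) (x : EuclideanSpace ℝ (Fin n)) :
    maxFn n (fun _ => c) x ≤ c := by
  refine iSup₂_le fun r hr => ?_
  rw [setLIntegral_const, mul_div_assoc, ENNReal.div_self (measure_ball_pos volume x hr).ne'
    measure_ball_lt_top.ne, mul_one]

lemma weak11 (hn : 1 ≤ n) {g : EuclideanSpace ℝ (Fin n) → ℝ≥0∞} (hg : Measurable g)
    {l : ℝ≥0∞} (hl0 : l ≠ 0) (hlt : l ≠ ∞) :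
    volume {x | l < maxFn n g x} ≤ ENNReal.ofReal ((5:ℝ) ^ n) * (∫⁻ x, g x) / l := by
  haveI : Nontrivial (EuclideanSpace ℝ (Fin n)) := by
    apply Module.nontrivial_of_finrank_pos (R := ℝ)
    rw [finrank_euclideanSpace_fin]; omega
  set I := ∫⁻ x, g x with hI
  by_cases hItop : I = ∞
  · rw [hItop, ENNReal.mul_top (by positivity), ENNReal.top_div_of_ne_top hlt]
    exact le_top
  set E := {x | l < maxFn n g x} with hE
  -- selection of radii
  have key : ∀ x ∈ E, ∃ r : ℝ, 0 < r ∧ l * volume (ball x r) < ∫⁻ y in ball x r, g y := by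
    intro x hx
    simp only [hE, maxFn, mem_setOf_eq, lt_iSup_iff] at hx
    obtain ⟨r, hr, hx⟩ := hx
    refine ⟨r, hr, ?_⟩
    rwa [ENNReal.lt_div_iff_mul_lt (Or.inl (measure_ball_pos volume x hr).ne')
      (Or.inl measure_ball_lt_top.ne)] at hx
  choose! r hr0 hrint using key
  -- bound on the radii
  set v₁ := volume (ball (0 : EuclideanSpace ℝ (Fin n)) 1) with hv₁
  have hv₁0 : v₁ ≠ 0 := (measure_ball_pos volume _ one_pos).ne'
  have hballvol : ∀ (x : EuclideanSpace ℝ (Fin n)) (s : ℝ), 0 ≤ s →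
      volume (ball x s) = ENNReal.ofReal (s ^ n) * v₁ := by
    intro x s hs
    rw [hv₁, Measure.addHaar_ball volume x hs, finrank_euclideanSpace_fin]
  set R : ℝ := max (I / (l * v₁)).toReal 1 with hR
  have hrR : ∀ x ∈ E, r x ≤ R := by
    intro x hx
    have h1 := hrint x hx
    have h2 : l * (ENNReal.ofReal (r x ^ n) * v₁) < I := by
      rw [← hballvol x (r x) (hr0 x hx).le]
      exact h1.trans_le (setLIntegral_le_lintegral _ _)
    have h3 : ENNReal.ofReal (r x ^ n) < I / (l * v₁) := by
      rw [ENNReal.lt_div_iff_mul_lt (Or.inl (mul_ne_zero hl0 hv₁0)) (Or.inl (ENNReal.mul_ne_top hlt measure_ball_lt_top.ne))]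
      calc ENNReal.ofReal (r x ^ n) * (l * v₁)
          = l * (ENNReal.ofReal (r x ^ n) * v₁) := by ring
        _ < I := h2
    have h4 : r x ^ n < (I / (l * v₁)).toReal := by
      refine (ENNReal.ofReal_lt_iff_lt_toReal (pow_nonneg (hr0 x hx).le n) ?_).1 h3
      simp only [Ne, ENNReal.div_eq_top]
      intro hcon
      rcases hcon with ⟨h1', h2'⟩ | ⟨h1', h2'⟩
      · exact (by simp [hl0, hv₁0] : l * v₁ ≠ 0) h2'
      · exact hItop h1'
    rcases le_or_gt (r x) 1 with h | h
    · exact h.trans (le_max_right _ _)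
    · refine le_trans ?_ (le_max_left _ _)
      calc r x ≤ r x ^ n := le_self_pow₀ h.le (by omega)
        _ ≤ (I / (l * v₁)).toReal := h4.le
  -- Vitali covering
  obtain ⟨u, uE, u_disj, hu⟩ :=
    Vitali.exists_disjoint_subfamily_covering_enlargement_closedBall E id r R hrR 4 (by norm_num)
  have u_disj' : u.PairwiseDisjoint fun a => ball (id a) (r a) :=
    u_disj.mono fun a => ball_subset_closedBall
  have u_cnt : u.Countable :=
    u_disj'.countable_of_isOpen (fun i _ => isOpen_ball)
      (fun i hi => nonempty_ball.2 (hr0 i (uE hi)))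
  haveI := u_cnt.to_subtype
  have hcover : E ⊆ ⋃ b : u, closedBall (b : EuclideanSpace ℝ (Fin n)) (4 * r b) := by
    intro x hx
    obtain ⟨b, hb, hsub⟩ := hu x hx
    exact mem_iUnion.2 ⟨⟨b, hb⟩, hsub (mem_closedBall_self (hr0 x hx).le)⟩
  calc volume E ≤ ∑' b : u, volume (closedBall (b : EuclideanSpace ℝ (Fin n)) (4 * r b)) :=
        (measure_mono hcover).trans (measure_iUnion_le _)
    _ ≤ ∑' b : u, ENNReal.ofReal ((5:ℝ) ^ n) * (volume (ball (b : EuclideanSpace ℝ (Fin n)) (r b))) := by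
        refine ENNReal.tsum_le_tsum fun b => ?_
        have hrb : 0 < r b := hr0 b (uE b.2)
        rw [Measure.addHaar_closedBall volume _ (by positivity), finrank_euclideanSpace_fin,
          hballvol _ _ hrb.le, ← hv₁, ← mul_assoc]
        gcongr
        rw [← ENNReal.ofReal_mul (by positivity)]
        apply ENNReal.ofReal_le_ofReal
        rw [mul_pow]
        exact mul_le_mul_of_nonneg_right
          (pow_le_pow_left₀ (by norm_num) (by norm_num) n) (pow_nonneg hrb.le n)
    _ = ENNReal.ofReal ((5:ℝ) ^ n) * ∑' b : u, volume (ball (b : EuclideanSpace ℝ (Fin n)) (r b)) :=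
        ENNReal.tsum_mul_left
    _ ≤ ENNReal.ofReal ((5:ℝ) ^ n) * ∑' b : u, (∫⁻ y in ball (b : EuclideanSpace ℝ (Fin n)) (r b), g y) / l := by
        gcongr with b
        refine ENNReal.le_div_iff_mul_le (Or.inl hl0) (Or.inl hlt) |>.2 ?_
        rw [mul_comm]
        exact (hrint b (uE b.2)).le
    _ = ENNReal.ofReal ((5:ℝ) ^ n) * (∑' b : u, ∫⁻ y in ball (b : EuclideanSpace ℝ (Fin n)) (r b), g y) / l := by
        simp only [div_eq_mul_inv]
        rw [ENNReal.tsum_mul_right, mul_assoc]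
    _ ≤ ENNReal.ofReal ((5:ℝ) ^ n) * I / l := by
        gcongr
        calc ∑' b : u, ∫⁻ y in ball (b : EuclideanSpace ℝ (Fin n)) (r b), g y
            = ∫⁻ y in ⋃ b : u, ball (b : EuclideanSpace ℝ (Fin n)) (r b), g y :=
              (lintegral_iUnion (fun b => measurableSet_ball) (u_disj'.subtype _ _) g).symm
          _ ≤ I := setLIntegral_le_lintegral _ _

lemma wLp_single_le {p : ℝ} (h : EuclideanSpace ℝ (Fin n) → ℝ≥0∞) {β : ℝ≥0∞}
    (hβ0 : β ≠ 0) (hβt : β ≠ ∞) :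
    β * (volume {x | β < h x}) ^ (1 / p) ≤ wLp n p h := by
  have hc : ((β.toNNReal : ℝ≥0∞)) = β := ENNReal.coe_toNNReal hβt
  have := le_iSup₂ (f := fun (l : NNReal) (_ : 0 < l) =>
      (l : ℝ≥0∞) * (volume {x | (l : ℝ≥0∞) < h x}) ^ (1 / p)) β.toNNReal
      (ENNReal.toNNReal_pos hβ0 hβt)
  rwa [hc] at this

lemma dist_bound {p : ℝ} (hp : 0 < p) (h : EuclideanSpace ℝ (Fin n) → ℝ≥0∞) {β : ℝ≥0∞}
    (hβ0 : β ≠ 0) (hβt : β ≠ ∞) :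
    volume {x | β < h x} ≤ (wLp n p h / β) ^ p := by
  have h1 : (volume {x | β < h x}) ^ (1 / p) ≤ wLp n p h / β := by
    rw [ENNReal.le_div_iff_mul_le (Or.inl hβ0) (Or.inl hβt), mul_comm]
    exact wLp_single_le h hβ0 hβt
  calc volume {x | β < h x} = ((volume {x | β < h x}) ^ (1 / p)) ^ p := by
        rw [← ENNReal.rpow_mul, one_div_mul_cancel hp.ne', ENNReal.rpow_one]
    _ ≤ (wLp n p h / β) ^ p := ENNReal.rpow_le_rpow h1 hp.le

lemma wLp_mono {p : ℝ} (hp : 0 < p) {h₁ h₂ : EuclideanSpace ℝ (Fin n) → ℝ≥0∞}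
    (h : ∀ x, h₁ x ≤ h₂ x) : wLp n p h₁ ≤ wLp n p h₂ := by
  refine iSup₂_le fun l hl => ?_
  refine le_trans ?_ (le_iSup₂ (f := fun (l : NNReal) (_ : 0 < l) =>
    (l : ℝ≥0∞) * (volume {x | (l : ℝ≥0∞) < h₂ x}) ^ (1 / p)) l hl)
  exact mul_le_mul_right (ENNReal.rpow_le_rpow
    (measure_mono fun x hx => lt_of_lt_of_le hx (h x)) (by positivity)) _

lemma wLp_smul_le {p : ℝ} (hp : 0 < p) {c : ℝ≥0∞} (hc : c ≠ ∞)
    (h : EuclideanSpace ℝ (Fin n) → ℝ≥0∞) :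
    wLp n p (fun x => c * h x) ≤ c * wLp n p h := by
  rcases eq_or_ne c 0 with rfl | hc0
  · refine iSup₂_le fun l hl => ?_
    have : {x | (l : ℝ≥0∞) < 0 * h x} = ∅ := by
      ext x; simp
    rw [this, measure_empty, ENNReal.zero_rpow_of_pos (by positivity), mul_zero]
    exact zero_le
  · refine iSup₂_le fun l hl => ?_
    have hl0 : (l : ℝ≥0∞) ≠ 0 := by exact_mod_cast hl.ne'
    have hset : {x | (l : ℝ≥0∞) < c * h x} = {x | (l : ℝ≥0∞) / c < h x} := by
      ext x
      simp only [mem_setOf_eq, ENNReal.div_lt_iff (Or.inl hc0) (Or.inl hc), mul_comm]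
    have hd0 : (l : ℝ≥0∞) / c ≠ 0 := by
      simp [ENNReal.div_eq_zero_iff, hl0, hc]
    have hdt : (l : ℝ≥0∞) / c ≠ ∞ := by
      simp [ENNReal.div_eq_top, hl0, hc0, coe_ne_top]
    calc (l : ℝ≥0∞) * (volume {x | (l : ℝ≥0∞) < c * h x}) ^ (1 / p)
        = c * (((l : ℝ≥0∞) / c) * (volume {x | (l : ℝ≥0∞) / c < h x}) ^ (1 / p)) := by
          rw [hset, ← mul_assoc, ENNReal.mul_div_cancel hc0 hc]
      _ ≤ c * wLp n p h := by gcongr; exact wLp_single_le h hd0 hdt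

lemma wLp_add3_le {p : ℝ} (hp : 1 < p) (h₁ h₂ h₃ : EuclideanSpace ℝ (Fin n) → ℝ≥0∞) :
    wLp n p (fun x => h₁ x + h₂ x + h₃ x) ≤ 3 * (wLp n p h₁ + wLp n p h₂ + wLp n p h₃) := by
  refine iSup₂_le fun l hl => ?_
  have hl0 : (l : ℝ≥0∞) ≠ 0 := by exact_mod_cast hl.ne'
  set β : ℝ≥0∞ := (l : ℝ≥0∞) / 3 with hβ
  have hβ0 : β ≠ 0 := by simp [hβ, ENNReal.div_eq_zero_iff, hl0]
  have hβt : β ≠ ∞ := by simp [hβ, ENNReal.div_eq_top, coe_ne_top]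
  have hsub : {x | (l : ℝ≥0∞) < h₁ x + h₂ x + h₃ x} ⊆
      {x | β < h₁ x} ∪ {x | β < h₂ x} ∪ {x | β < h₃ x} := by
    intro x hx
    by_contra hc
    simp only [mem_union, mem_setOf_eq, not_or, not_lt] at hc
    have : h₁ x + h₂ x + h₃ x ≤ 3 * β := by
      calc h₁ x + h₂ x + h₃ x ≤ β + β + β := by
            exact add_le_add (add_le_add hc.1.1 hc.1.2) hc.2
        _ = 3 * β := by ring
    rw [hβ, ENNReal.mul_div_cancel' (by norm_num) (by norm_num)] at this
    exact absurd (lt_of_lt_of_le hx this) (lt_irrefl _)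
  have hvol : volume {x | (l : ℝ≥0∞) < h₁ x + h₂ x + h₃ x} ≤
      volume {x | β < h₁ x} + volume {x | β < h₂ x} + volume {x | β < h₃ x} := by
    refine (measure_mono hsub).trans ?_
    exact (measure_union_le _ _).trans (add_le_add_left (measure_union_le _ _) _)
  have hppos : (0:ℝ) < 1 / p := by positivity
  have hple : 1 / p ≤ 1 := by
    rw [div_le_one (by linarith)]; linarith
  calc (l : ℝ≥0∞) * (volume {x | (l : ℝ≥0∞) < h₁ x + h₂ x + h₃ x}) ^ (1 / p)
      ≤ (l : ℝ≥0∞) * ((volume {x | β < h₁ x}) ^ (1/p) + (volume {x | β < h₂ x}) ^ (1/p)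
          + (volume {x | β < h₃ x}) ^ (1/p)) := by
        gcongr
        refine (ENNReal.rpow_le_rpow hvol hppos.le).trans ?_
        refine (ENNReal.rpow_add_le_add_rpow _ _ hppos.le hple).trans ?_
        gcongr
        exact ENNReal.rpow_add_le_add_rpow _ _ hppos.le hple
    _ = 3 * (β * (volume {x | β < h₁ x}) ^ (1/p) + β * (volume {x | β < h₂ x}) ^ (1/p)
          + β * (volume {x | β < h₃ x}) ^ (1/p)) := by
        have h3β : (l : ℝ≥0∞) = 3 * β := by
          rw [hβ, ENNReal.mul_div_cancel' (by norm_num) (by norm_num)]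
        rw [h3β]; ring
    _ ≤ 3 * (wLp n p h₁ + wLp n p h₂ + wLp n p h₃) := by
        gcongr
        · exact wLp_single_le h₁ hβ0 hβt
        · exact wLp_single_le h₂ hβ0 hβt
        · exact wLp_single_le h₃ hβ0 hβt

noncomputable def Cmax (n : ℕ) (p : ℝ) : ℝ≥0∞ :=
  2 * (ENNReal.ofReal ((5:ℝ) ^ n) * 2 * (1 - (2:ℝ≥0∞) ^ ((1:ℝ) - p))⁻¹) ^ (1 / p)

lemma geom_lt_one {p : ℝ} (hp : 1 < p) : (2:ℝ≥0∞) ^ ((1:ℝ) - p) < 1 :=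
  ENNReal.rpow_lt_one_of_one_lt_of_neg (by norm_num) (by linarith)

lemma Dfac_pos {p : ℝ} (hp : 1 < p) :
    0 < ENNReal.ofReal ((5:ℝ) ^ n) * 2 * (1 - (2:ℝ≥0∞) ^ ((1:ℝ) - p))⁻¹ := by
  apply ENNReal.mul_pos
  · apply mul_ne_zero _ two_ne_zero
    simp only [Ne, ENNReal.ofReal_eq_zero, not_le]
    positivity
  · simp only [Ne, ENNReal.inv_eq_zero]
    exact (lt_of_le_of_lt tsub_le_self one_lt_top).ne

lemma Dfac_ne_top {p : ℝ} (hp : 1 < p) :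
    ENNReal.ofReal ((5:ℝ) ^ n) * 2 * (1 - (2:ℝ≥0∞) ^ ((1:ℝ) - p))⁻¹ ≠ ⊤ := by
  apply ENNReal.mul_ne_top (ENNReal.mul_ne_top ENNReal.ofReal_ne_top (by norm_num))
  rw [Ne, ENNReal.inv_eq_top, tsub_eq_zero_iff_le, not_le]
  exact geom_lt_one hp

lemma Cmax_pos {p : ℝ} (hp : 1 < p) : 0 < Cmax n p := by
  apply ENNReal.mul_pos two_ne_zero
  exact (ENNReal.rpow_pos (Dfac_pos hp) (Dfac_ne_top hp)).ne'

lemma Cmax_ne_top {p : ℝ} (hp : 1 < p) : Cmax n p ≠ ⊤ := by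
  apply ENNReal.mul_ne_top (by norm_num)
  exact ENNReal.rpow_ne_top_of_nonneg (by positivity) (Dfac_ne_top hp)

lemma geom_term_eq {p : ℝ} (hp : 1 < p) {α W : ℝ≥0∞} (hα0 : α ≠ 0) (hαt : α ≠ ⊤)
    (hWt : W ≠ ⊤) (k : ℕ) :
    (2:ℝ≥0∞) ^ (k+1) * α * (W / ((2:ℝ≥0∞) ^ k * α)) ^ p =
      (2 * α ^ ((1:ℝ) - p) * W ^ p) * ((2:ℝ≥0∞) ^ ((1:ℝ) - p)) ^ k := by
  have h2 : (2:ℝ≥0∞) ≠ 0 := two_ne_zero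
  have h2t : (2:ℝ≥0∞) ≠ ⊤ := ofNat_ne_top
  have h2kp_0 : (2:ℝ≥0∞) ^ ((k:ℝ) * p) ≠ 0 := (ENNReal.rpow_pos (by norm_num) h2t).ne'
  have h2kp_t : (2:ℝ≥0∞) ^ ((k:ℝ) * p) ≠ ⊤ :=
    ENNReal.rpow_ne_top_of_nonneg (by positivity) h2t
  have expand : (W / ((2:ℝ≥0∞) ^ k * α)) ^ p
      = W ^ p * ((2:ℝ≥0∞) ^ (-((k:ℝ) * p)) * α ^ (-p)) := by
    rw [ENNReal.div_rpow_of_nonneg _ _ (by linarith : (0:ℝ) ≤ p),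
      ENNReal.mul_rpow_of_ne_top (pow_ne_top h2t) hαt,
      ← ENNReal.rpow_natCast (2:ℝ≥0∞) k, ← ENNReal.rpow_mul,
      div_eq_mul_inv, ENNReal.mul_inv (Or.inl h2kp_0) (Or.inl h2kp_t),
      ← ENNReal.rpow_neg, ← ENNReal.rpow_neg]
  rw [expand, ← ENNReal.rpow_natCast (2:ℝ≥0∞) (k+1),
    ← ENNReal.rpow_natCast ((2:ℝ≥0∞) ^ ((1:ℝ) - p)) k, ← ENNReal.rpow_mul]
  push_cast
  have e1 : (2:ℝ≥0∞) ^ ((k:ℝ)+1) * (2:ℝ≥0∞) ^ (-((k:ℝ) * p))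
      = (2:ℝ≥0∞) ^ (((k:ℝ)+1) - (k:ℝ) * p) := by
    rw [← ENNReal.rpow_add _ _ h2 h2t]; congr 1 <;> ring
  have e2 : α ^ (1:ℝ) * α ^ (-p) = α ^ ((1:ℝ) - p) := by
    rw [← ENNReal.rpow_add _ _ hα0 hαt]; congr 1 <;> ring
  have e3 : (2:ℝ≥0∞) ^ (((k:ℝ)+1) - (k:ℝ) * p)
      = (2:ℝ≥0∞) ^ (1:ℝ) * (2:ℝ≥0∞) ^ (((1:ℝ) - p) * (k:ℝ)) := by
    rw [← ENNReal.rpow_add _ _ h2 h2t]; congr 1; ring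
  calc (2:ℝ≥0∞) ^ ((k:ℝ)+1) * α * (W ^ p * ((2:ℝ≥0∞) ^ (-((k:ℝ) * p)) * α ^ (-p)))
      = ((2:ℝ≥0∞) ^ ((k:ℝ)+1) * (2:ℝ≥0∞) ^ (-((k:ℝ) * p))) * (α ^ (1:ℝ) * α ^ (-p)) * W ^ p := by
        rw [ENNReal.rpow_one]; ring
    _ = (2:ℝ≥0∞) ^ (1:ℝ) * (2:ℝ≥0∞) ^ (((1:ℝ) - p) * (k:ℝ)) * α ^ ((1:ℝ) - p) * W ^ p := by
        rw [e1, e2, e3]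
    _ = 2 * α ^ ((1:ℝ) - p) * W ^ p * (2:ℝ≥0∞) ^ (((1:ℝ) - p) * (k:ℝ)) := by
        rw [ENNReal.rpow_one]; ring

lemma wLp_maxFn_le {p : ℝ} (hp : 1 < p) (hn : 1 ≤ n)
    {g : EuclideanSpace ℝ (Fin n) → ℝ≥0∞} (hg : Measurable g) :
    wLp n p (maxFn n g) ≤ Cmax n p * wLp n p g := by
  have hp0 : (0:ℝ) < p := by linarith
  set W := wLp n p g with hW
  rcases eq_or_ne W ⊤ with hWt | hWt
  · rw [hWt, ENNReal.mul_top (Cmax_pos hp).ne']; exact le_top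
  refine iSup₂_le fun l hl => ?_
  have hl0 : (l:ℝ≥0∞) ≠ 0 := by exact_mod_cast hl.ne'
  set α : ℝ≥0∞ := (l:ℝ≥0∞) / 2 with hα
  have hα0 : α ≠ 0 := by simp [hα, ENNReal.div_eq_zero_iff, hl0]
  have hαt : α ≠ ⊤ := by simp [hα, ENNReal.div_eq_top, coe_ne_top]
  set h : EuclideanSpace ℝ (Fin n) → ℝ≥0∞ := fun y => if α < g y then g y else 0 with hh
  have hmeas : Measurable h :=
    Measurable.ite (measurableSet_lt measurable_const hg) hg measurable_const
  have hgh : ∀ y, g y ≤ h y + α := by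
    intro y
    by_cases hy : α < g y
    · simp only [hh, if_pos hy]; exact le_self_add
    · simp only [hh, if_neg hy, zero_add]; exact not_lt.1 hy
  have hM : ∀ x, maxFn n g x ≤ maxFn n h x + α := fun x =>
    (maxFn_mono hgh x).trans ((maxFn_add_le (g₂ := fun _ => α) hmeas x).trans
      (by gcongr; exact maxFn_const_le α x))
  have hsub : {x | (l:ℝ≥0∞) < maxFn n g x} ⊆ {x | α < maxFn n h x} := by
    intro x hx
    simp only [mem_setOf_eq] at hx ⊢
    by_contra hc
    push_neg at hc
    have hle : maxFn n g x ≤ (l:ℝ≥0∞) := by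
      calc maxFn n g x ≤ maxFn n h x + α := hM x
        _ ≤ α + α := add_le_add_left hc _
        _ = l := by rw [hα, ENNReal.add_halves]
    exact absurd (lt_of_lt_of_le hx hle) (lt_irrefl _)
  -- pointwise dyadic bound on h
  have hptw : ∀ y, h y ≤
      ∑' k : ℕ, ({x | (2:ℝ≥0∞) ^ k * α < g x}).indicator
        (fun _ => (2:ℝ≥0∞) ^ (k+1) * α) y := by
    intro y
    by_cases hy : α < g y
    swap
    · simp only [hh, if_neg hy]; exact zero_le
    simp only [hh, if_pos hy]
    rcases eq_or_ne (g y) ⊤ with hgt | hgt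
    · have hmem : ∀ k : ℕ, y ∈ {x | (2:ℝ≥0∞) ^ k * α < g x} := fun k => by
        simp only [mem_setOf_eq, hgt]
        exact (ENNReal.mul_ne_top (pow_ne_top ofNat_ne_top) hαt).lt_top
      have hsum : (∑' k : ℕ, ({x | (2:ℝ≥0∞) ^ k * α < g x}).indicator
          (fun _ => (2:ℝ≥0∞) ^ (k+1) * α) y) = ⊤ := by
        refine eq_top_iff.2 ?_
        calc (⊤:ℝ≥0∞) = ∑' _ : ℕ, α := (ENNReal.tsum_const_eq_top_of_ne_zero hα0).symm
          _ ≤ _ := by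
              refine ENNReal.tsum_le_tsum fun k => ?_
              rw [indicator_of_mem (hmem k)]
              calc α = 1 * α := (one_mul α).symm
                _ ≤ (2:ℝ≥0∞) ^ (k+1) * α := by
                    gcongr
                    exact one_le_pow_of_one_le' (by norm_num : (1:ℝ≥0∞) ≤ 2) _
      rw [hgt, hsum]
    · have hex : ∃ K : ℕ, g y ≤ (2:ℝ≥0∞) ^ K * α := by
        obtain ⟨K, hK⟩ := ENNReal.exists_nat_gt
          (by simp [ENNReal.div_eq_top, hgt, hα0] : g y / α ≠ ⊤)
        refine ⟨K, ?_⟩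
        have h2K : ((K:ℕ):ℝ≥0∞) ≤ (2:ℝ≥0∞) ^ K := by
          calc ((K:ℕ):ℝ≥0∞) ≤ (((2:ℕ) ^ K : ℕ):ℝ≥0∞) := by
                exact_mod_cast Nat.cast_le.2 (Nat.lt_two_pow_self (n := K)).le
            _ = (2:ℝ≥0∞) ^ K := by push_cast; ring
        have hlt : g y / α < (2:ℝ≥0∞) ^ K := hK.trans_le h2K
        rw [ENNReal.div_lt_iff (Or.inl hα0) (Or.inl hαt)] at hlt
        exact hlt.le
      have hK₀ : g y ≤ (2:ℝ≥0∞) ^ (Nat.find hex) * α := Nat.find_spec hex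
      have hK₀0 : Nat.find hex ≠ 0 := by
        intro h0
        rw [h0, pow_zero, one_mul] at hK₀
        exact absurd (lt_of_lt_of_le hy hK₀) (lt_irrefl _)
      obtain ⟨K', hK'⟩ : ∃ K', Nat.find hex = K' + 1 := ⟨Nat.find hex - 1, by omega⟩
      have hmem : y ∈ {x | (2:ℝ≥0∞) ^ K' * α < g x} := by
        simp only [mem_setOf_eq]
        by_contra hc
        push_neg at hc
        exact Nat.find_min hex (by omega) hc
      calc g y ≤ (2:ℝ≥0∞) ^ (K'+1) * α := by rw [← hK']; exact hK₀
        _ = ({x | (2:ℝ≥0∞) ^ K' * α < g x}).indicator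
            (fun _ => (2:ℝ≥0∞) ^ (K'+1) * α) y :=
            (indicator_of_mem hmem (fun _ => (2:ℝ≥0∞) ^ (K'+1) * α)).symm
        _ ≤ _ := ENNReal.le_tsum K'
  -- integral bound
  have hint : ∫⁻ y, h y ≤
      (2 * α ^ ((1:ℝ) - p) * W ^ p) * (1 - (2:ℝ≥0∞) ^ ((1:ℝ) - p))⁻¹ := by
    calc ∫⁻ y, h y
        ≤ ∫⁻ y, ∑' k : ℕ, ({x | (2:ℝ≥0∞) ^ k * α < g x}).indicator
            (fun _ => (2:ℝ≥0∞) ^ (k+1) * α) y := lintegral_mono hptw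
      _ = ∑' k : ℕ, ∫⁻ y, ({x | (2:ℝ≥0∞) ^ k * α < g x}).indicator
            (fun _ => (2:ℝ≥0∞) ^ (k+1) * α) y := by
          exact lintegral_tsum fun k =>
            (measurable_const.indicator (measurableSet_lt measurable_const hg)).aemeasurable
      _ = ∑' k : ℕ, (2:ℝ≥0∞) ^ (k+1) * α * volume {x | (2:ℝ≥0∞) ^ k * α < g x} := by
          refine tsum_congr fun k => ?_
          rw [lintegral_indicator_const (measurableSet_lt measurable_const hg)]
      _ ≤ ∑' k : ℕ, (2:ℝ≥0∞) ^ (k+1) * α * (W / ((2:ℝ≥0∞) ^ k * α)) ^ p := by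
          refine ENNReal.tsum_le_tsum fun k => ?_
          refine mul_le_mul_right ?_ _
          refine dist_bound hp0 g ?_ ?_
          · exact mul_ne_zero (pow_ne_zero _ two_ne_zero) hα0
          · exact ENNReal.mul_ne_top (pow_ne_top ofNat_ne_top) hαt
      _ = ∑' k : ℕ, (2 * α ^ ((1:ℝ) - p) * W ^ p) * ((2:ℝ≥0∞) ^ ((1:ℝ) - p)) ^ k := by
          exact tsum_congr fun k => geom_term_eq hp hα0 hαt hWt k
      _ = (2 * α ^ ((1:ℝ) - p) * W ^ p) * (1 - (2:ℝ≥0∞) ^ ((1:ℝ) - p))⁻¹ := by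
          rw [ENNReal.tsum_mul_left, ENNReal.tsum_geometric]
  -- conclude
  set cgeo : ℝ≥0∞ := (1 - (2:ℝ≥0∞) ^ ((1:ℝ) - p))⁻¹ with hcgeo
  set D : ℝ≥0∞ := ENNReal.ofReal ((5:ℝ) ^ n) * 2 * cgeo with hD
  have hWα_t : W / α ≠ ⊤ := by
    simp [ENNReal.div_eq_top, hWt, hα0]
  have hkey : ENNReal.ofReal ((5:ℝ) ^ n) *
      ((2 * α ^ ((1:ℝ) - p) * W ^ p) * cgeo) / α = D * (W / α) ^ p := by
    have hα1 : α ^ ((1:ℝ) - p) * α⁻¹ = α ^ (-p) := by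
      rw [← ENNReal.rpow_neg_one α, ← ENNReal.rpow_add _ _ hα0 hαt]
      congr 1; ring
    have hWαp : (W / α) ^ p = W ^ p * α ^ (-p) := by
      rw [div_eq_mul_inv, ENNReal.mul_rpow_of_ne_top hWt (by simp [ENNReal.inv_ne_top, hα0]),
        ← ENNReal.rpow_neg_one α, ← ENNReal.rpow_mul]
      congr 2; ring
    rw [hWαp, hD, div_eq_mul_inv]
    calc ENNReal.ofReal ((5:ℝ) ^ n) * ((2 * α ^ ((1:ℝ) - p) * W ^ p) * cgeo) * α⁻¹
        = (ENNReal.ofReal ((5:ℝ) ^ n) * 2 * cgeo) * (W ^ p * (α ^ ((1:ℝ) - p) * α⁻¹)) := by ring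
      _ = ENNReal.ofReal ((5:ℝ) ^ n) * 2 * cgeo * (W ^ p * α ^ (-p)) := by rw [hα1]
  calc (l:ℝ≥0∞) * (volume {x | (l:ℝ≥0∞) < maxFn n g x}) ^ (1/p)
      ≤ (l:ℝ≥0∞) * (volume {x | α < maxFn n h x}) ^ (1/p) := by
        exact mul_le_mul_right (ENNReal.rpow_le_rpow (measure_mono hsub) (by positivity)) _
    _ ≤ (l:ℝ≥0∞) * (ENNReal.ofReal ((5:ℝ) ^ n) * (∫⁻ y, h y) / α) ^ (1/p) := by
        exact mul_le_mul_right (ENNReal.rpow_le_rpow (weak11 hn hmeas hα0 hαt) (by positivity)) _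
    _ ≤ (l:ℝ≥0∞) * (D * (W / α) ^ p) ^ (1/p) := by
        rw [← hkey]
        gcongr
    _ = (l:ℝ≥0∞) * (D ^ (1/p) * (W / α)) := by
        rw [ENNReal.mul_rpow_of_ne_top (Dfac_ne_top hp)
          (ENNReal.rpow_ne_top_of_nonneg hp0.le hWα_t), ← ENNReal.rpow_mul,
          mul_one_div_cancel hp0.ne', ENNReal.rpow_one]
    _ = D ^ (1/p) * (W * ((l:ℝ≥0∞) / α)) := by
        simp only [div_eq_mul_inv]; ring
    _ = D ^ (1/p) * (W * 2) := by
        have h2α : (l:ℝ≥0∞) = 2 * α := by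
          rw [hα, ENNReal.mul_div_cancel two_ne_zero ofNat_ne_top]
        rw [h2α, mul_div_assoc, ENNReal.div_self hα0 hαt, mul_one]
    _ = Cmax n p * W := by
        rw [hD]; unfold Cmax; ring

lemma scalar_bound {m c₀ : ℝ} (hm : 0 < m) (hc₀ : 0 < c₀) {x : ℝ} (hx : 0 ≤ x) :
    (2:ℝ) ^ (2 * x * m) * Real.exp (-(c₀ * (4:ℝ) ^ x)) ≤ Real.exp (m ^ 2 / c₀) := by
  have hlog2 : 0 < Real.log 2 := Real.log_pos (by norm_num)
  have h2 : (2:ℝ) ^ (2 * x * m) = Real.exp (2 * x * m * Real.log 2) := by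
    rw [Real.rpow_def_of_pos (by norm_num), mul_comm]
  have h4 : (4:ℝ) ^ x = Real.exp (x * (2 * Real.log 2)) := by
    rw [Real.rpow_def_of_pos (by norm_num)]
    congr 1
    have hl4 : Real.log 4 = 2 * Real.log 2 := by
      rw [show (4:ℝ) = 2 ^ 2 by norm_num, Real.log_pow]; push_cast; ring
    rw [hl4]; ring
  rw [h2, ← Real.exp_add]
  apply Real.exp_le_exp.2
  have hq : (x * Real.log 2) ^ 2 ≤ (4:ℝ) ^ x := by
    rw [h4]
    have hexp := Real.add_one_le_exp (x * Real.log 2)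
    have hpos := Real.exp_pos (x * Real.log 2)
    have hu : 0 ≤ x * Real.log 2 := by positivity
    calc (x * Real.log 2) ^ 2 ≤ (x * Real.log 2 + 1) ^ 2 := by nlinarith
      _ ≤ Real.exp (x * Real.log 2) ^ 2 := by nlinarith
      _ = Real.exp (x * (2 * Real.log 2)) := by
          rw [sq, ← Real.exp_add]; congr 1; ring
  rw [← sub_eq_add_neg, le_div_iff₀ hc₀]
  nlinarith [sq_nonneg (c₀ * (x * Real.log 2) - m),
    mul_le_mul_of_nonneg_left hq (mul_pos hc₀ hc₀).le]

lemma tsum3 (f : ℤ → ℝ≥0∞) (j : ℤ) :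
    ∑' j' : {j' : ℤ // |j - j'| ≤ 1}, f j'.1 = f (j-1) + f j + f (j+1) := by
  have he : ∀ j' : ℤ, |j - j'| ≤ 1 ↔ j' ∈ ({j-1, j, j+1} : Finset ℤ) := by
    intro j'
    simp only [abs_le, Finset.mem_insert, Finset.mem_singleton]
    omega
  calc (∑' j' : {j' : ℤ // |j - j'| ≤ 1}, f j'.1)
      = ∑' j' : {j' : ℤ // j' ∈ ({j-1, j, j+1} : Finset ℤ)}, f j'.1 :=
        Equiv.tsum_eq (Equiv.subtypeEquivRight he) (fun j' => f j'.1) |>.symm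
        |>.symm
    _ = ∑ j' ∈ ({j-1, j, j+1} : Finset ℤ), f j' := Finset.tsum_subtype _ f
    _ = f (j-1) + f j + f (j+1) := by
        rw [Finset.sum_insert (by simp only [Finset.mem_insert, Finset.mem_singleton]; omega),
          Finset.sum_insert (by simp only [Finset.mem_singleton]; omega),
          Finset.sum_singleton, add_assoc]

lemma rpow3 {q : ℝ} (hq : 1 ≤ q) (x y z : ℝ≥0∞) :
    (x + y + z) ^ q ≤ 3 ^ q * (x ^ q + y ^ q + z ^ q) := by
  have hq0 : (0:ℝ) < q := by linarith
  set s := x ^ q + y ^ q + z ^ q with hs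
  have hbase : ∀ w : ℝ≥0∞, w ^ q ≤ s → w ≤ s ^ (1/q) := by
    intro w hw
    calc w = (w ^ q) ^ (1/q) := by
          rw [← ENNReal.rpow_mul, mul_one_div_cancel hq0.ne', ENNReal.rpow_one]
      _ ≤ s ^ (1/q) := ENNReal.rpow_le_rpow hw (by positivity)
  have hle : x + y + z ≤ 3 * s ^ (1/q) := by
    have hx := hbase x (le_trans le_self_add le_self_add)
    have hy := hbase y (le_trans le_add_self le_self_add)
    have hz := hbase z le_add_self
    calc x + y + z ≤ s ^ (1/q) + s ^ (1/q) + s ^ (1/q) :=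
          add_le_add (add_le_add hx hy) hz
      _ = 3 * s ^ (1/q) := by ring
  calc (x + y + z) ^ q ≤ (3 * s ^ (1/q)) ^ q := ENNReal.rpow_le_rpow hle hq0.le
    _ = 3 ^ q * s := by
        rw [ENNReal.mul_rpow_of_nonneg _ _ hq0.le, ← ENNReal.rpow_mul,
          one_div_mul_cancel hq0.ne', ENNReal.rpow_one]


/-- Section 3.3 (high-frequency estimate, core of Theorem 1.1): if for `j ≥ j_t`
`F_{j,j_t} ≤ C₀ e^{-c₀ 4^{j-j_t}} ∑_{|j-j'|≤1} M G_{j'}` pointwise, then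
`sup_{j_t} ∑_{j≥j_t} (2^{2(j-j_t)m} 2^{j(n/p-1)} ‖F_{j,j_t}‖_{L^{p,∞}})^q
  ≤ C ∑_{j'} (2^{j'(n/p-1)} ‖G_{j'}‖_{L^{p,∞}})^q`. -/
theorem high_frequency_estimate (n : ℕ) (hn : 1 ≤ n) (p q m c₀ : ℝ)
    (hp : 1 < p) (hq : 1 ≤ q) (hm : 0 < m) (hc₀ : 0 < c₀) (C₀ : NNReal) (hC₀ : 0 < C₀)
    (G : ℤ → EuclideanSpace ℝ (Fin n) → ℝ≥0∞)
    (F : ℤ → ℤ → EuclideanSpace ℝ (Fin n) → ℝ≥0∞)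
    (hG : ∀ j, Measurable (G j)) (hF : ∀ j jt, Measurable (F j jt))
    (hFG : ∀ (jt j : ℤ), jt ≤ j → ∀ x : EuclideanSpace ℝ (Fin n),
      F j jt x ≤ (C₀ : ℝ≥0∞) * ENNReal.ofReal (Real.exp (-(c₀ * (4 : ℝ) ^ (j - jt)))) *
        ∑' j' : {j' : ℤ // |j - j'| ≤ 1}, maxFn n (G j'.1) x) :
    ∃ C : NNReal, 0 < C ∧
      (⨆ jt : ℤ, ∑' j : {j : ℤ // jt ≤ j},
          ((2 : ℝ≥0∞) ^ (2 * ((j.1 : ℝ) - (jt : ℝ)) * m) *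
            (2 : ℝ≥0∞) ^ ((j.1 : ℝ) * ((n : ℝ) / p - 1)) * wLp n p (F j.1 jt)) ^ q)
        ≤ (C : ℝ≥0∞) *
          ∑' j' : ℤ, ((2 : ℝ≥0∞) ^ ((j' : ℝ) * ((n : ℝ) / p - 1)) * wLp n p (G j')) ^ q := by
  have hp0 : (0:ℝ) < p := by linarith
  have hq0 : (0:ℝ) < q := by linarith
  set σ : ℝ := (n : ℝ) / p - 1 with hσ
  set ρ : ℝ≥0∞ := (2:ℝ≥0∞) ^ |σ| with hρ
  set CM : ℝ≥0∞ := Cmax n p with hCM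
  set K : ℝ≥0∞ := (C₀ : ℝ≥0∞) * ENNReal.ofReal (Real.exp (m^2/c₀)) * (3 * CM) * ρ with hK
  have hρt : ρ ≠ ⊤ := ENNReal.rpow_ne_top_of_nonneg (abs_nonneg σ) ofNat_ne_top
  have hKt : K ≠ ⊤ := by
    refine ENNReal.mul_ne_top (ENNReal.mul_ne_top (ENNReal.mul_ne_top coe_ne_top
      ofReal_ne_top) (ENNReal.mul_ne_top (by norm_num) (Cmax_ne_top hp))) hρt
  set Cbig : ℝ≥0∞ := K ^ q * 3 ^ q * 3 with hCbig
  have hCbigt : Cbig ≠ ⊤ := by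
    refine ENNReal.mul_ne_top (ENNReal.mul_ne_top
      (ENNReal.rpow_ne_top_of_nonneg hq0.le hKt)
      (ENNReal.rpow_ne_top_of_nonneg hq0.le (by norm_num))) (by norm_num)
  set Aq : ℤ → ℝ≥0∞ := fun j' => ((2:ℝ≥0∞) ^ ((j' : ℝ) * σ) * wLp n p (G j')) ^ q with hAq
  refine ⟨Cbig.toNNReal + 1, by positivity, ?_⟩
  have hCle : Cbig ≤ ((Cbig.toNNReal + 1 : NNReal) : ℝ≥0∞) := by
    rw [ENNReal.coe_add, ENNReal.coe_toNNReal hCbigt, ENNReal.coe_one]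
    exact le_self_add
  refine le_trans ?_ (mul_le_mul_left hCle _)
  refine iSup_le fun jt => ?_
  have h2ne : (2:ℝ≥0∞) ≠ 0 := two_ne_zero
  have h2t : (2:ℝ≥0∞) ≠ ⊤ := ofNat_ne_top
  have hshift : ∀ a b : ℝ, |a - b| ≤ 1 →
      (2:ℝ≥0∞) ^ (a * σ) ≤ ρ * (2:ℝ≥0∞) ^ (b * σ) := by
    intro a b hab
    have hsplit : (2:ℝ≥0∞) ^ (a * σ) = (2:ℝ≥0∞) ^ ((a - b) * σ) * (2:ℝ≥0∞) ^ (b * σ) := by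
      rw [← ENNReal.rpow_add _ _ h2ne h2t]; congr 1; ring
    rw [hsplit]
    refine mul_le_mul_left ?_ _
    rw [hρ]
    refine ENNReal.rpow_le_rpow_of_exponent_le (by norm_num) ?_
    calc (a - b) * σ ≤ |(a - b) * σ| := le_abs_self _
      _ = |a - b| * |σ| := abs_mul _ _
      _ ≤ 1 * |σ| := mul_le_mul_of_nonneg_right hab (abs_nonneg σ)
      _ = |σ| := one_mul _
  have key : ∀ j : {j : ℤ // jt ≤ j},
      ((2:ℝ≥0∞) ^ (2 * ((j.1 : ℝ) - (jt : ℝ)) * m) *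
          (2:ℝ≥0∞) ^ ((j.1 : ℝ) * σ) * wLp n p (F j.1 jt)) ^ q
        ≤ K ^ q * 3 ^ q * (Aq (j.1 - 1) + Aq j.1 + Aq (j.1 + 1)) := by
    rintro ⟨j, hj⟩
    dsimp only
    have hjr : (0:ℝ) ≤ (j:ℝ) - (jt:ℝ) := by
      have hle : (jt:ℝ) ≤ (j:ℝ) := by exact_mod_cast hj
      linarith
    set e : ℝ≥0∞ := ENNReal.ofReal (Real.exp (-(c₀ * (4 : ℝ) ^ (j - jt)))) with he
    have hcoef : (2:ℝ≥0∞) ^ (2 * ((j:ℝ) - (jt:ℝ)) * m) * e ≤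
        ENNReal.ofReal (Real.exp (m^2/c₀)) := by
      have h4 : (4:ℝ) ^ (j - jt) = (4:ℝ) ^ ((j:ℝ) - (jt:ℝ)) := by
        rw [← Real.rpow_intCast 4 (j - jt)]
        congr 1
        push_cast
        ring
      rw [he, show ((2:ℝ≥0∞)) = ENNReal.ofReal 2 by norm_num,
        ENNReal.ofReal_rpow_of_pos (by norm_num),
        ← ENNReal.ofReal_mul (by positivity), h4]
      exact ENNReal.ofReal_le_ofReal (scalar_bound hm hc₀ hjr)
    have hwF : wLp n p (F j jt) ≤ ((C₀ : ℝ≥0∞) * e) *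
        (3 * (CM * wLp n p (G (j-1)) + CM * wLp n p (G j) + CM * wLp n p (G (j+1)))) := by
      calc wLp n p (F j jt)
          ≤ wLp n p (fun x => ((C₀ : ℝ≥0∞) * e) *
              (maxFn n (G (j-1)) x + maxFn n (G j) x + maxFn n (G (j+1)) x)) := by
            refine wLp_mono hp0 fun x => ?_
            refine (hFG jt j hj x).trans ?_
            rw [tsum3 (fun j'' => maxFn n (G j'') x) j]
        _ ≤ ((C₀ : ℝ≥0∞) * e) * wLp n p (fun x =>
              maxFn n (G (j-1)) x + maxFn n (G j) x + maxFn n (G (j+1)) x) :=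
            wLp_smul_le hp0 (ENNReal.mul_ne_top coe_ne_top ofReal_ne_top) _
        _ ≤ ((C₀ : ℝ≥0∞) * e) * (3 * (wLp n p (maxFn n (G (j-1)))
              + wLp n p (maxFn n (G j)) + wLp n p (maxFn n (G (j+1))))) :=
            mul_le_mul_right (wLp_add3_le hp _ _ _) _
        _ ≤ ((C₀ : ℝ≥0∞) * e) * (3 * (CM * wLp n p (G (j-1))
              + CM * wLp n p (G j) + CM * wLp n p (G (j+1)))) := by
            refine mul_le_mul_right (mul_le_mul_right ?_ _) _
            exact add_le_add (add_le_add (wLp_maxFn_le hp hn (hG _))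
              (wLp_maxFn_le hp hn (hG _))) (wLp_maxFn_le hp hn (hG _))
    have hinner : (2:ℝ≥0∞) ^ (2 * ((j:ℝ) - (jt:ℝ)) * m) *
        (2:ℝ≥0∞) ^ ((j:ℝ) * σ) * wLp n p (F j jt)
        ≤ K * ((2:ℝ≥0∞) ^ (((j-1 : ℤ):ℝ) * σ) * wLp n p (G (j-1))
             + (2:ℝ≥0∞) ^ ((j:ℝ) * σ) * wLp n p (G j)
             + (2:ℝ≥0∞) ^ (((j+1 : ℤ):ℝ) * σ) * wLp n p (G (j+1))) := by
      have hd1 : |(j:ℝ) - ((j-1 : ℤ):ℝ)| ≤ 1 := by push_cast; norm_num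
      have hd2 : |(j:ℝ) - (j:ℝ)| ≤ 1 := by norm_num
      have hd3 : |(j:ℝ) - ((j+1 : ℤ):ℝ)| ≤ 1 := by push_cast; norm_num
      calc (2:ℝ≥0∞) ^ (2 * ((j:ℝ) - (jt:ℝ)) * m) *
            (2:ℝ≥0∞) ^ ((j:ℝ) * σ) * wLp n p (F j jt)
          ≤ (2:ℝ≥0∞) ^ (2 * ((j:ℝ) - (jt:ℝ)) * m) * (2:ℝ≥0∞) ^ ((j:ℝ) * σ) *
            (((C₀ : ℝ≥0∞) * e) * (3 * (CM * wLp n p (G (j-1))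
              + CM * wLp n p (G j) + CM * wLp n p (G (j+1))))) :=
            mul_le_mul_right hwF _
        _ = ((2:ℝ≥0∞) ^ (2 * ((j:ℝ) - (jt:ℝ)) * m) * e) * ((C₀ : ℝ≥0∞) * (3 * CM)) *
            ((2:ℝ≥0∞) ^ ((j:ℝ) * σ) * wLp n p (G (j-1))
              + (2:ℝ≥0∞) ^ ((j:ℝ) * σ) * wLp n p (G j)
              + (2:ℝ≥0∞) ^ ((j:ℝ) * σ) * wLp n p (G (j+1))) := by ring
        _ ≤ (ENNReal.ofReal (Real.exp (m^2/c₀))) * ((C₀ : ℝ≥0∞) * (3 * CM)) *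
            ((ρ * (2:ℝ≥0∞) ^ (((j-1 : ℤ):ℝ) * σ)) * wLp n p (G (j-1))
              + (ρ * (2:ℝ≥0∞) ^ ((j:ℝ) * σ)) * wLp n p (G j)
              + (ρ * (2:ℝ≥0∞) ^ (((j+1 : ℤ):ℝ) * σ)) * wLp n p (G (j+1))) := by
            refine mul_le_mul' (mul_le_mul_left hcoef _) ?_
            exact add_le_add (add_le_add
              (mul_le_mul_left (hshift _ _ hd1) _)
              (mul_le_mul_left (hshift _ _ hd2) _))
              (mul_le_mul_left (hshift _ _ hd3) _)
        _ = K * ((2:ℝ≥0∞) ^ (((j-1 : ℤ):ℝ) * σ) * wLp n p (G (j-1))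
             + (2:ℝ≥0∞) ^ ((j:ℝ) * σ) * wLp n p (G j)
             + (2:ℝ≥0∞) ^ (((j+1 : ℤ):ℝ) * σ) * wLp n p (G (j+1))) := by
            rw [hK]; ring
    calc ((2:ℝ≥0∞) ^ (2 * ((j:ℝ) - (jt:ℝ)) * m) *
          (2:ℝ≥0∞) ^ ((j:ℝ) * σ) * wLp n p (F j jt)) ^ q
        ≤ (K * ((2:ℝ≥0∞) ^ (((j-1 : ℤ):ℝ) * σ) * wLp n p (G (j-1))
             + (2:ℝ≥0∞) ^ ((j:ℝ) * σ) * wLp n p (G j)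
             + (2:ℝ≥0∞) ^ (((j+1 : ℤ):ℝ) * σ) * wLp n p (G (j+1)))) ^ q :=
          ENNReal.rpow_le_rpow hinner hq0.le
      _ = K ^ q * ((2:ℝ≥0∞) ^ (((j-1 : ℤ):ℝ) * σ) * wLp n p (G (j-1))
             + (2:ℝ≥0∞) ^ ((j:ℝ) * σ) * wLp n p (G j)
             + (2:ℝ≥0∞) ^ (((j+1 : ℤ):ℝ) * σ) * wLp n p (G (j+1))) ^ q :=
          ENNReal.mul_rpow_of_nonneg _ _ hq0.le
      _ ≤ K ^ q * (3 ^ q * (Aq (j - 1) + Aq j + Aq (j + 1))) := by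
          refine mul_le_mul_right ?_ _
          rw [hAq]
          exact rpow3 hq _ _ _
      _ = K ^ q * 3 ^ q * (Aq (j - 1) + Aq j + Aq (j + 1)) := by rw [mul_assoc]
  have hinj : ∀ d : ℤ, (∑' j : {j : ℤ // jt ≤ j}, Aq (j.1 + d)) ≤ ∑' j' : ℤ, Aq j' := by
    intro d
    refine ENNReal.tsum_comp_le_tsum_of_injective
      (f := fun j : {j : ℤ // jt ≤ j} => j.1 + d) ?_ Aq
    intro a b hab
    simp only at hab
    exact Subtype.ext (by omega)
  have hinj' : (∑' j : {j : ℤ // jt ≤ j}, Aq (j.1 - 1)) ≤ ∑' j' : ℤ, Aq j' := by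
    have : ∀ j : {j : ℤ // jt ≤ j}, Aq (j.1 - 1) = Aq (j.1 + (-1)) := by
      intro j; congr 1
    rw [tsum_congr this]
    exact hinj (-1)
  have hinj0 : (∑' j : {j : ℤ // jt ≤ j}, Aq j.1) ≤ ∑' j' : ℤ, Aq j' := by
    have : ∀ j : {j : ℤ // jt ≤ j}, Aq j.1 = Aq (j.1 + 0) := by
      intro j; congr 1; ring
    rw [tsum_congr this]
    exact hinj 0
  calc (∑' j : {j : ℤ // jt ≤ j},
        ((2:ℝ≥0∞) ^ (2 * ((j.1 : ℝ) - (jt : ℝ)) * m) *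
          (2:ℝ≥0∞) ^ ((j.1 : ℝ) * σ) * wLp n p (F j.1 jt)) ^ q)
      ≤ ∑' j : {j : ℤ // jt ≤ j}, K ^ q * 3 ^ q * (Aq (j.1 - 1) + Aq j.1 + Aq (j.1 + 1)) :=
        ENNReal.tsum_le_tsum key
    _ = K ^ q * 3 ^ q * ((∑' j : {j : ℤ // jt ≤ j}, Aq (j.1 - 1))
          + (∑' j : {j : ℤ // jt ≤ j}, Aq j.1)
          + (∑' j : {j : ℤ // jt ≤ j}, Aq (j.1 + 1))) := by
        rw [ENNReal.tsum_mul_left, ENNReal.tsum_add, ENNReal.tsum_add]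
    _ ≤ K ^ q * 3 ^ q * ((∑' j' : ℤ, Aq j') + (∑' j' : ℤ, Aq j') + (∑' j' : ℤ, Aq j')) :=
        mul_le_mul_right (add_le_add (add_le_add hinj' hinj0) (hinj 1)) _
    _ = Cbig * ∑' j' : ℤ, Aq j' := by rw [hCbig]; ring
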